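/- Let λ ∈ F with λ + λ̄ = 1 and let a ∈ F with a ≠ 0. Then ∑_{x ∈ F, x ≠ 0} ε(Tr_n(λ·x^(2^m+1)) + Tr_n(a·x)) equals −2^m − 1 if Tr_m(a·ā) = 0, and equals 2^m − 1 if Tr_m(a·ā) = 1. (Note a·ā ∈ K, so Tr_m applies.) -/

import Mathlib

open Finset

/-- Absolute trace-style sum `Tr_n : F → F` for `n = 2m`. -/
def trN (m : ℕ) {F : Type*} [Field F] (x : F) : F :=
  ∑ i ∈ Finset.range (2 * m), x ^ (2 ^ i)

/-- Trace-style sum `Tr_m : F → F` (meant for elements of the subfield `K`). -/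
def trM (m : ℕ) {F : Type*} [Field F] (x : F) : F :=
  ∑ i ∈ Finset.range m, x ^ (2 ^ i)

/-- `ε(0) = 1`, `ε(t) = -1` for `t ≠ 0`. -/
def eps {F : Type*} [Field F] [DecidableEq F] (t : F) : ℤ :=
  if t = 0 then 1 else -1

/-- Kloosterman sum `k_m(μ) = ∑_{x ∈ K, x ≠ 0} χ_m(x + μ x⁻¹)`. -/
def klooM (m : ℕ) {F : Type*} [Field F] [Fintype F] [DecidableEq F] (μ : F) : ℤ :=
  ∑ x ∈ Finset.univ.filter (fun x : F => x ^ (2 ^ m) = x ∧ x ≠ 0),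
    eps (trM m (x + μ * x⁻¹))

/-- Kloosterman sum over the big field: `k_n(μ) = ∑_{x ∈ F, x ≠ 0} χ_n(x + μ x⁻¹)`. -/
def klooN (m : ℕ) {F : Type*} [Field F] [Fintype F] [DecidableEq F] (μ : F) : ℤ :=
  ∑ x ∈ Finset.univ.filter (fun x : F => x ≠ 0), eps (trN m (x + μ * x⁻¹))

/-- Walsh transform of `h : F → F` (with values in `{0,1}`) at `a`. -/
def walsh (m : ℕ) {F : Type*} [Field F] [Fintype F] [DecidableEq F] (h : F → F) (a : F) : ℤ :=
  ∑ x : F, eps (h x + trN m (a * x))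

/-- The Boolean function `f_{λ,μ}(x) = Tr_n(λ x^{2^m+1}) + Tr_n(x)·Tr_n(μ x^{2^m-1})`. -/
def fFun (m : ℕ) {F : Type*} [Field F] (l μ : F) : F → F :=
  fun x => trN m (l * x ^ (2 ^ m + 1)) + trN m x * trN m (μ * x ^ (2 ^ m - 1))

/-- The Boolean function
`g_{λ,μ}(x) = (1 + Tr_n(x))·Tr_n(λ x^{2^m+1}) + Tr_n(x)·Tr_n(μ x^{2^m-1})`. -/
def gFun (m : ℕ) {F : Type*} [Field F] (l μ : F) : F → F :=
  fun x => (1 + trN m x) * trN m (l * x ^ (2 ^ m + 1)) +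
    trN m x * trN m (μ * x ^ (2 ^ m - 1))

/-! ### Auxiliary lemmas -/

section Aux

variable {F : Type*} [Field F]

lemma aux_trM_add (m : ℕ) [CharP F 2] (x y : F) :
    trM m (x + y) = trM m x + trM m y := by
  unfold trM
  rw [← Finset.sum_add_distrib]
  exact Finset.sum_congr rfl fun i _ => add_pow_char_pow x y 2 i

lemma aux_trM_zero (m : ℕ) : trM m (0 : F) = 0 := by
  unfold trM
  exact Finset.sum_eq_zero fun i _ => zero_pow (Nat.two_pow_pos i).ne'

lemma aux_trN_zero (m : ℕ) : trN m (0 : F) = 0 := by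
  unfold trN
  exact Finset.sum_eq_zero fun i _ => zero_pow (Nat.two_pow_pos i).ne'

lemma aux_trN_eq_trM (m : ℕ) [CharP F 2] (x : F) :
    trN m x = trM m (x + x ^ (2 ^ m)) := by
  rw [aux_trM_add]
  unfold trN trM
  rw [two_mul, Finset.sum_range_add]
  congr 1
  refine Finset.sum_congr rfl fun i _ => ?_
  rw [← pow_mul, ← pow_add]

lemma aux_tr_sq (k : ℕ) [CharP F 2] {y : F} (hy : y ^ 2 ^ k = y) :
    (∑ i ∈ Finset.range k, y ^ 2 ^ i) ^ 2 = ∑ i ∈ Finset.range k, y ^ 2 ^ i := by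
  have h0 : (∑ i ∈ Finset.range k, y ^ 2 ^ i) ^ 2 = ∑ i ∈ Finset.range k, y ^ 2 ^ (i + 1) := by
    rw [sum_pow_char]
    exact Finset.sum_congr rfl fun i _ => by rw [← pow_mul, pow_succ]
  have h1 := Finset.sum_range_succ' (fun i => y ^ 2 ^ i) k
  have h2 := Finset.sum_range_succ (fun i => y ^ 2 ^ i) k
  simp only [pow_zero, pow_one] at h1
  rw [hy] at h2
  rw [h0]
  linear_combination h2 - h1

lemma aux_trM_sq (m : ℕ) [CharP F 2] {y : F} (hy : y ^ 2 ^ m = y) :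
    trM m y ^ 2 = trM m y := aux_tr_sq m hy

lemma aux_sq01 {u : F} (hu : u ^ 2 = u) : u = 0 ∨ u = 1 := by
  have h : u * (u - 1) = 0 := by linear_combination hu
  rcases mul_eq_zero.mp h with h | h
  · exact Or.inl h
  · exact Or.inr (sub_eq_zero.mp h)

variable [DecidableEq F]

lemma aux_eps_mul [CharP F 2] {u v : F} (hu : u ^ 2 = u) (hv : v ^ 2 = v) :
    eps (u + v) = eps u * eps v := by
  have h2 : (1 : F) + 1 = 0 := CharTwo.add_self_eq_zero 1
  rcases aux_sq01 hu with rfl | rfl <;> rcases aux_sq01 hv with rfl | rfl <;>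
    simp [eps, h2, one_ne_zero]

lemma aux_eps_add_one [CharP F 2] {u : F} (hu : u ^ 2 = u) :
    eps (u + 1) = -eps u := by
  have h2 : (1 : F) + 1 = 0 := CharTwo.add_self_eq_zero 1
  rcases aux_sq01 hu with rfl | rfl <;> simp [eps, h2, one_ne_zero]

variable [Fintype F]

lemma aux_card_pow_le {n : ℕ} (hn : 0 < n) (u : F) :
    (Finset.univ.filter fun x : F => x ^ n = u).card ≤ n := by
  have hsub : (Finset.univ.filter fun x : F => x ^ n = u) ⊆
      (Polynomial.nthRoots n u).toFinset := by
    intro x hx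
    rw [Multiset.mem_toFinset, Polynomial.mem_nthRoots hn]
    exact (Finset.mem_filter.mp hx).2
  calc (Finset.univ.filter fun x : F => x ^ n = u).card
      ≤ (Polynomial.nthRoots n u).toFinset.card := Finset.card_le_card hsub
    _ ≤ Multiset.card (Polynomial.nthRoots n u) := Multiset.toFinset_card_le _
    _ ≤ n := Polynomial.card_nthRoots n u

lemma aux_exists_trN_one (m : ℕ) (hm : 0 < m) [CharP F 2]
    (hcard : Fintype.card F = 2 ^ (2 * m)) :
    ∃ z : F, trN m z = 1 := by
  have hpow : ∀ x : F, x ^ 2 ^ (2 * m) = x := by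
    intro x
    have := FiniteField.pow_card x
    rwa [hcard] at this
  have hne : ∃ z : F, trN m z ≠ 0 := by
    by_contra hall
    push_neg at hall
    set P : Polynomial F := ∑ i ∈ Finset.range (2 * m), Polynomial.X ^ 2 ^ i with hP
    have hcoeff : P.coeff (2 ^ (2 * m - 1)) = 1 := by
      rw [hP, Polynomial.finset_sum_coeff]
      have hco : ∀ i ∈ Finset.range (2 * m),
          (Polynomial.X ^ 2 ^ i : Polynomial F).coeff (2 ^ (2 * m - 1)) =
            if i = 2 * m - 1 then 1 else 0 := by
        intro i _
        rw [Polynomial.coeff_X_pow]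
        congr 1
        simp only [eq_iff_iff]
        constructor
        · intro h
          exact (Nat.pow_right_injective le_rfl h).symm
        · rintro rfl; rfl
      rw [Finset.sum_congr rfl hco, Finset.sum_ite_eq' (Finset.range (2 * m)) (2 * m - 1)]
      simp only [Finset.mem_range]
      rw [if_pos (by omega)]
    have hP0 : P ≠ 0 := fun h => by simp [h] at hcoeff
    have hdeg : P.natDegree ≤ 2 ^ (2 * m - 1) := by
      rw [hP]
      refine Polynomial.natDegree_sum_le_of_forall_le _ _ fun i hi => ?_
      rw [Polynomial.natDegree_X_pow]
      exact Nat.pow_le_pow_right (by norm_num) (by simp only [Finset.mem_range] at hi; omega)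
    have heval : ∀ x : F, P.eval x = trN m x := by
      intro x
      rw [hP, Polynomial.eval_finset_sum]
      simp [trN]
    have hsub : (Finset.univ : Finset F) ⊆ P.roots.toFinset := by
      intro x _
      rw [Multiset.mem_toFinset, Polynomial.mem_roots']
      exact ⟨hP0, by rw [Polynomial.IsRoot, heval, hall]⟩
    have hle : Fintype.card F ≤ 2 ^ (2 * m - 1) := by
      calc Fintype.card F = (Finset.univ : Finset F).card := rfl
        _ ≤ P.roots.toFinset.card := Finset.card_le_card hsub
        _ ≤ Multiset.card P.roots := Multiset.toFinset_card_le _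
        _ ≤ P.natDegree := Polynomial.card_roots' P
        _ ≤ 2 ^ (2 * m - 1) := hdeg
    rw [hcard] at hle
    have := Nat.pow_lt_pow_right (a := 2) (by norm_num) (by omega : 2 * m - 1 < 2 * m)
    omega
  obtain ⟨z, hz⟩ := hne
  refine ⟨z, ?_⟩
  have hsq : trN m z ^ 2 = trN m z := aux_tr_sq (2 * m) (hpow z)
  rcases aux_sq01 hsq with h | h
  · exact absurd h hz
  · exact h

end Aux

theorem stmt4 (m : ℕ) (hm : 0 < m) (F : Type*) [Field F] [Fintype F] [DecidableEq F]
    (hcard : Fintype.card F = 2 ^ (2 * m))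
    (l : F) (hl : l + l ^ (2 ^ m) = 1) (a : F) (ha : a ≠ 0) :
    (trM m (a * a ^ (2 ^ m)) = 0 →
      ∑ x ∈ Finset.univ.filter (fun x : F => x ≠ 0),
        eps (trN m (l * x ^ (2 ^ m + 1)) + trN m (a * x)) = -(2 ^ m : ℤ) - 1) ∧
    (trM m (a * a ^ (2 ^ m)) = 1 →
      ∑ x ∈ Finset.univ.filter (fun x : F => x ≠ 0),
        eps (trN m (l * x ^ (2 ^ m + 1)) + trN m (a * x)) = (2 ^ m : ℤ) - 1) := by
  -- characteristic 2
  haveI hchar : CharP F 2 := by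
    haveI := ringChar.charP F
    obtain ⟨n, hp, hc⟩ := FiniteField.card F (ringChar F)
    have hdvd : ringChar F ∣ 2 ^ (2 * m) := by
      rw [← hcard, hc]
      exact dvd_pow_self _ (by positivity : (0:ℕ) < (n:ℕ)).ne'
    have h2 : ringChar F = 2 :=
      (Nat.prime_dvd_prime_iff_eq hp Nat.prime_two).mp (hp.dvd_of_dvd_pow hdvd)
    exact h2 ▸ ringChar.charP F
  have hq2 : 2 ≤ 2 ^ m := by
    calc 2 = 2 ^ 1 := (pow_one 2).symm
      _ ≤ 2 ^ m := Nat.pow_le_pow_right (by norm_num) hm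
  have hpow : ∀ x : F, x ^ 2 ^ (2 * m) = x := fun x => by
    rw [← hcard]; exact FiniteField.pow_card x
  have hqq : 2 ^ m * 2 ^ m = 2 ^ (2 * m) := by rw [← pow_add, two_mul]
  have hxqq : ∀ x : F, (x ^ 2 ^ m) ^ 2 ^ m = x := fun x => by
    rw [← pow_mul, hqq]; exact hpow x
  have hKnorm : ∀ x : F, (x ^ (2 ^ m + 1)) ^ 2 ^ m = x ^ (2 ^ m + 1) := by
    intro x
    have h1 : (x ^ (2 ^ m + 1)) ^ 2 ^ m = (x ^ 2 ^ m) ^ 2 ^ m * x ^ 2 ^ m := by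
      rw [← pow_mul, ← pow_mul, ← pow_add]
      congr 1
      ring
    rw [h1, hxqq, pow_succ]
    ring
  have hcK : (a * a ^ 2 ^ m) ^ 2 ^ m = a * a ^ 2 ^ m := by
    rw [mul_pow, hxqq]
    ring
  have hcsq : trM m (a * a ^ 2 ^ m) ^ 2 = trM m (a * a ^ 2 ^ m) := aux_trM_sq m hcK
  have hQsq : ∀ x : F, trM m (x ^ (2 ^ m + 1)) ^ 2 = trM m (x ^ (2 ^ m + 1)) :=
    fun x => aux_trM_sq m (hKnorm x)
  -- Step B : the quadratic part simplifies
  have hB : ∀ x : F, trN m (l * x ^ (2 ^ m + 1)) = trM m (x ^ (2 ^ m + 1)) := by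
    intro x
    rw [aux_trN_eq_trM]
    have h1 : (l * x ^ (2 ^ m + 1)) ^ 2 ^ m = l ^ 2 ^ m * x ^ (2 ^ m + 1) := by
      rw [mul_pow, hKnorm x]
    rw [h1]
    have h2 : l * x ^ (2 ^ m + 1) + l ^ 2 ^ m * x ^ (2 ^ m + 1)
        = (l + l ^ 2 ^ m) * x ^ (2 ^ m + 1) := by ring
    rw [h2, hl, one_mul]
  have htrN : ∀ y : F, trN m y = trM m y + trM m (y ^ 2 ^ m) := fun y => by
    rw [aux_trN_eq_trM, aux_trM_add]
  have hself : ∀ t : F, t + t = 0 := CharTwo.add_self_eq_zero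
  -- key substitution identity
  have hkey : ∀ x : F,
      trM m ((x + a ^ 2 ^ m) ^ (2 ^ m + 1)) + trN m (a * (x + a ^ 2 ^ m)) =
        trM m (x ^ (2 ^ m + 1)) + trM m (a * a ^ 2 ^ m) := by
    intro x
    have hb : (a ^ 2 ^ m) ^ 2 ^ m = a := hxqq a
    have hexp : (x + a ^ 2 ^ m) ^ (2 ^ m + 1)
        = x ^ (2 ^ m + 1) + a * x + (a * x) ^ 2 ^ m + a * a ^ 2 ^ m := by
      calc (x + a ^ 2 ^ m) ^ (2 ^ m + 1)
          = (x + a ^ 2 ^ m) ^ 2 ^ m * (x + a ^ 2 ^ m) := pow_succ _ _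
        _ = (x ^ 2 ^ m + a) * (x + a ^ 2 ^ m) := by
            rw [add_pow_char_pow x (a ^ 2 ^ m) 2 m, hb]
        _ = x ^ (2 ^ m + 1) + a * x + (a * x) ^ 2 ^ m + a * a ^ 2 ^ m := by
            rw [pow_succ, mul_pow]
            ring
    have hdist : a * (x + a ^ 2 ^ m) = a * x + a * a ^ 2 ^ m := by ring
    have hax : (a * x + a * a ^ 2 ^ m) ^ 2 ^ m = (a * x) ^ 2 ^ m + a * a ^ 2 ^ m := by
      rw [add_pow_char_pow (a * x) (a * a ^ 2 ^ m) 2 m, hcK]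
    rw [hexp, hdist, htrN, hax, aux_trM_add, aux_trM_add, aux_trM_add, aux_trM_add, aux_trM_add]
    linear_combination hself (trM m (a * x)) + hself (trM m ((a * x) ^ 2 ^ m)) +
      hself (trM m (a * a ^ 2 ^ m))
  -- the punctured domain and the subfield K*
  set s : Finset F := Finset.univ.filter (fun x : F => x ≠ 0) with hs
  set Kstar : Finset F := Finset.univ.filter (fun u : F => u ^ 2 ^ m = u ∧ u ≠ 0) with hKstar
  have hmaps : ∀ x ∈ s, x ^ (2 ^ m + 1) ∈ Kstar := by
    intro x hx
    rw [hs, Finset.mem_filter] at hx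
    rw [hKstar, Finset.mem_filter]
    exact ⟨Finset.mem_univ _, hKnorm x, pow_ne_zero _ hx.2⟩
  have hscard : s.card = 2 ^ (2 * m) - 1 := by
    rw [hs, Finset.filter_ne', Finset.card_erase_of_mem (Finset.mem_univ 0),
      Finset.card_univ, hcard]
  have hKle : Kstar.card ≤ 2 ^ m - 1 := by
    have hsub : Kstar ⊆ Finset.univ.filter (fun u : F => u ^ (2 ^ m - 1) = 1) := by
      intro u hu
      rw [hKstar, Finset.mem_filter] at hu
      obtain ⟨-, hu1, hu2⟩ := hu
      rw [Finset.mem_filter]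
      refine ⟨Finset.mem_univ _, ?_⟩
      have h1 : u ^ (2 ^ m - 1) * u = 1 * u := by
        rw [one_mul, ← pow_succ]
        rw [Nat.sub_add_cancel (by omega)]
        exact hu1
      exact mul_right_cancel₀ hu2 h1
    exact (Finset.card_le_card hsub).trans (aux_card_pow_le (by omega) 1)
  have hub : ∀ u ∈ Kstar,
      (s.filter (fun x => x ^ (2 ^ m + 1) = u)).card ≤ 2 ^ m + 1 := by
    intro u _
    refine (Finset.card_le_card ?_).trans (aux_card_pow_le (by omega) u)
    intro x hx
    rw [Finset.mem_filter] at hx ⊢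
    exact ⟨Finset.mem_univ _, hx.2⟩
  have hcount : s.card = ∑ u ∈ Kstar, (s.filter (fun x => x ^ (2 ^ m + 1) = u)).card :=
    Finset.card_eq_sum_card_fiberwise hmaps
  have hprod : (2 ^ m - 1) * (2 ^ m + 1) = 2 ^ (2 * m) - 1 := by
    rw [Nat.sub_one_mul, Nat.mul_add, mul_one, hqq]
    omega
  have hfib : ∀ u ∈ Kstar,
      (s.filter (fun x => x ^ (2 ^ m + 1) = u)).card = 2 ^ m + 1 := by
    have hconst : ∑ u ∈ Kstar, (2 ^ m + 1) = Kstar.card * (2 ^ m + 1) := by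
      rw [Finset.sum_const, smul_eq_mul]
    have h3 : ∑ u ∈ Kstar, (s.filter (fun x => x ^ (2 ^ m + 1) = u)).card
        ≤ Kstar.card * (2 ^ m + 1) := hconst ▸ Finset.sum_le_sum hub
    have h4 : Kstar.card * (2 ^ m + 1) ≤ 2 ^ (2 * m) - 1 :=
      hprod ▸ Nat.mul_le_mul_right _ hKle
    have heq : ∑ u ∈ Kstar, (s.filter (fun x => x ^ (2 ^ m + 1) = u)).card
        = ∑ u ∈ Kstar, (2 ^ m + 1) := by
      rw [hconst]
      have h5 : 2 ^ (2 * m) - 1 ≤ Kstar.card * (2 ^ m + 1) := by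
        rw [← hscard, hcount]; exact h3
      have h6 : Kstar.card * (2 ^ m + 1) ≤ ∑ u ∈ Kstar,
          (s.filter (fun x => x ^ (2 ^ m + 1) = u)).card := by
        rw [← hcount, hscard]; exact h4
      omega
    exact fun u hu => (Finset.sum_eq_sum_iff_of_le hub).mp heq u hu
  -- sum of eps ∘ trM over K*
  have hKstarSum : ∑ u ∈ Kstar, eps (trM m u) = -1 := by
    set Kset : Finset F := Finset.univ.filter (fun u : F => u ^ 2 ^ m = u) with hKset
    have h0K : (0 : F) ∈ Kset := by
      rw [hKset, Finset.mem_filter]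
      exact ⟨Finset.mem_univ 0, zero_pow (by positivity : (0:ℕ) < 2 ^ m).ne'⟩
    obtain ⟨z, hz⟩ := aux_exists_trN_one m hm hcard
    have hw : (z + z ^ 2 ^ m) ^ 2 ^ m = z + z ^ 2 ^ m := by
      rw [add_pow_char_pow z (z ^ 2 ^ m) 2 m, hxqq]
      ring
    have hwtr : trM m (z + z ^ 2 ^ m) = 1 := by rw [← aux_trN_eq_trM]; exact hz
    have hKsetSum : ∑ u ∈ Kset, eps (trM m u) = 0 := by
      have hflip : ∑ u ∈ Kset, eps (trM m u)
          = ∑ u ∈ Kset, eps (trM m (u + (z + z ^ 2 ^ m))) := by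
        refine Finset.sum_nbij' (fun u => u + (z + z ^ 2 ^ m))
          (fun u => u + (z + z ^ 2 ^ m)) ?_ ?_ ?_ ?_ ?_
        · intro u hu
          rw [hKset, Finset.mem_filter] at hu ⊢
          exact ⟨Finset.mem_univ _, by rw [add_pow_char_pow u (z + z ^ 2 ^ m) 2 m, hu.2, hw]⟩
        · intro u hu
          rw [hKset, Finset.mem_filter] at hu ⊢
          exact ⟨Finset.mem_univ _, by rw [add_pow_char_pow u (z + z ^ 2 ^ m) 2 m, hu.2, hw]⟩
        · intro u _
          linear_combination hself (z + z ^ 2 ^ m)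
        · intro u _
          linear_combination hself (z + z ^ 2 ^ m)
        · intro u hu
          congr 2
          linear_combination -hself (z + z ^ 2 ^ m)
      have hneg : ∀ u ∈ Kset, eps (trM m (u + (z + z ^ 2 ^ m))) = -eps (trM m u) := by
        intro u hu
        rw [hKset, Finset.mem_filter] at hu
        rw [aux_trM_add, hwtr]
        exact aux_eps_add_one (aux_trM_sq m hu.2)
      have hSS : ∑ u ∈ Kset, eps (trM m u) = -∑ u ∈ Kset, eps (trM m u) := by
        nth_rewrite 1 [hflip]
        rw [Finset.sum_congr rfl hneg]
        exact Finset.sum_neg_distrib (f := fun u => eps (trM m u))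
      linarith
    have herase : Kstar = Kset.erase 0 := by
      ext u
      rw [hKstar, hKset, Finset.mem_filter, Finset.mem_erase, Finset.mem_filter]
      tauto
    have h1 : eps (0 : F) = 1 := if_pos rfl
    have h2 := Finset.sum_erase_add Kset (fun u => eps (trM m u)) h0K
    simp only [aux_trM_zero, h1] at h2
    rw [hKsetSum] at h2
    rw [herase]
    linarith
  -- the complete exponential sum of the quadratic form equals -2^m
  have hT : ∑ x : F, eps (trM m (x ^ (2 ^ m + 1))) = -(2 ^ m : ℤ) := by
    have hsplit := Finset.sum_erase_add Finset.univ
      (fun x : F => eps (trM m (x ^ (2 ^ m + 1)))) (Finset.mem_univ (0 : F))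
    have hf0 : eps (trM m ((0 : F) ^ (2 ^ m + 1))) = 1 := by
      rw [zero_pow (by omega : 2 ^ m + 1 ≠ 0), aux_trM_zero]
      exact if_pos rfl
    have hfiber := Finset.sum_fiberwise_of_maps_to' hmaps (fun u => eps (trM m u))
    have hinner : ∀ u ∈ Kstar, ∑ _x ∈ s.filter (fun x => x ^ (2 ^ m + 1) = u),
        eps (trM m u) = ((2 ^ m : ℤ) + 1) * eps (trM m u) := by
      intro u hu
      rw [Finset.sum_const, hfib u hu, nsmul_eq_mul]
      push_cast
      ring
    have hstar : ∑ x ∈ s, eps (trM m (x ^ (2 ^ m + 1))) = -((2 ^ m : ℤ) + 1) := by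
      rw [← hfiber, Finset.sum_congr rfl hinner, ← Finset.mul_sum, hKstarSum]
      ring
    have hs' : s = Finset.univ.erase 0 := by rw [hs, Finset.filter_ne']
    rw [← hs'] at hsplit
    simp only [hstar, hf0] at hsplit
    linarith
  -- main evaluation
  have hmain : ∑ x ∈ s, eps (trN m (l * x ^ (2 ^ m + 1)) + trN m (a * x))
      = eps (trM m (a * a ^ 2 ^ m)) * (-(2 ^ m : ℤ)) - 1 := by
    have hshift : ∑ x : F, eps (trM m (x ^ (2 ^ m + 1)) + trN m (a * x))
        = ∑ x : F, eps (trM m ((x + a ^ 2 ^ m) ^ (2 ^ m + 1))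
            + trN m (a * (x + a ^ 2 ^ m))) :=
      (Fintype.sum_equiv (Equiv.addRight (a ^ 2 ^ m))
        (fun x => eps (trM m ((x + a ^ 2 ^ m) ^ (2 ^ m + 1)) + trN m (a * (x + a ^ 2 ^ m))))
        (fun x => eps (trM m (x ^ (2 ^ m + 1)) + trN m (a * x)))
        (fun x => by rw [Equiv.coe_addRight])).symm
    have hpoint : ∀ x : F, eps (trM m ((x + a ^ 2 ^ m) ^ (2 ^ m + 1))
        + trN m (a * (x + a ^ 2 ^ m)))
        = eps (trM m (x ^ (2 ^ m + 1))) * eps (trM m (a * a ^ 2 ^ m)) := by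
      intro x
      rw [hkey x]
      exact aux_eps_mul (hQsq x) hcsq
    have huniv : ∑ x : F, eps (trM m (x ^ (2 ^ m + 1)) + trN m (a * x))
        = eps (trM m (a * a ^ 2 ^ m)) * (-(2 ^ m : ℤ)) := by
      rw [hshift, Finset.sum_congr rfl (fun x _ => hpoint x), ← Finset.sum_mul, hT]
      ring
    have hsplit := Finset.sum_erase_add Finset.univ
      (fun x : F => eps (trM m (x ^ (2 ^ m + 1)) + trN m (a * x))) (Finset.mem_univ (0 : F))
    have hf0 : eps (trM m ((0 : F) ^ (2 ^ m + 1)) + trN m (a * 0)) = 1 := by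
      rw [zero_pow (by omega : 2 ^ m + 1 ≠ 0), aux_trM_zero, mul_zero, aux_trN_zero, add_zero]
      exact if_pos rfl
    have hpt : ∀ x ∈ s, eps (trN m (l * x ^ (2 ^ m + 1)) + trN m (a * x))
        = eps (trM m (x ^ (2 ^ m + 1)) + trN m (a * x)) := fun x _ => by rw [hB x]
    rw [Finset.sum_congr rfl hpt]
    have hs' : s = Finset.univ.erase 0 := by rw [hs, Finset.filter_ne']
    rw [hs']
    simp only [huniv, hf0] at hsplit
    linarith
  constructor
  · intro h
    rw [hmain, h]
    norm_num [eps]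
  · intro h
    rw [hmain, h]
    norm_num [eps]
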